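/- Let p > 2 be a real number, let n ≥ 4 be an integer, let j ∈ {1,…,n}, and let α_1,…,α_n be real numbers with α_i ≥ 1/(2n) for all i. Let u_1,…,u_n ∈ [0,1] be such that the number of indices i with u_i > 1/2 is at most n/2, and let ε_1,…,ε_n ∈ {−1,+1}. Then ∑_{i≠j} α_i·(1+ε_i u_i)^p/(1+u_i^p) ≥ 1/(8 + 2^{p+3}). -/
import Mathlib


theorem stmt_17 (p : ℝ) (hp : 2 < p) (n : ℕ) (hn : 4 ≤ n) (j : Fin n)
    (α u : Fin n → ℝ) (hα : ∀ i, 1 / (2 * (n : ℝ)) ≤ α i)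
    (hu : ∀ i, u i ∈ Set.Icc (0 : ℝ) 1)
    (hcard : ((Finset.univ.filter fun i => 1 / 2 < u i).card : ℝ) ≤ (n : ℝ) / 2)
    (ε : Fin n → ℝ) (hε : ∀ i, ε i = 1 ∨ ε i = -1) :
    ∑ i ∈ Finset.univ.erase j, α i * (1 + ε i * u i) ^ p / (1 + u i ^ p) ≥
      1 / (8 + (2:ℝ) ^ (p + 3)) := by
  have hn4 : (4:ℝ) ≤ (n:ℝ) := by exact_mod_cast hn
  have hnpos : (0:ℝ) < n := by linarith
  have hc : (0:ℝ) < (2:ℝ)^p := Real.rpow_pos_of_pos two_pos p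
  have hp0 : (0:ℝ) ≤ p := by linarith
  set b : ℝ := 1/(2*(n:ℝ)) * (1/((2:ℝ)^p+1)) with hb
  have hbpos : 0 < b := by positivity
  have hα0 : ∀ i, 0 ≤ α i := fun i => le_trans (by positivity) (hα i)
  have hbase : ∀ i, 0 ≤ 1 + ε i * u i := by
    intro i
    obtain ⟨h0, h1⟩ := hu i
    rcases hε i with h|h <;> rw [h] <;> nlinarith
  have hden : ∀ i, 0 < 1 + (u i)^p := by
    intro i
    have := Real.rpow_nonneg (hu i).1 p
    linarith
  have htermnn : ∀ i, 0 ≤ α i * (1 + ε i * u i) ^ p / (1 + u i ^ p) := by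
    intro i
    exact div_nonneg (mul_nonneg (hα0 i) (Real.rpow_nonneg (hbase i) p)) (hden i).le
  have hterm : ∀ i, u i ≤ 1/2 → b ≤ α i * (1 + ε i * u i) ^ p / (1 + u i ^ p) := by
    intro i hui
    obtain ⟨hu0, hu1⟩ := hu i
    have h1 : (1/2:ℝ) ≤ 1 + ε i * u i := by
      rcases hε i with h|h <;> rw [h] <;> nlinarith
    have h2 : ((1:ℝ)/2)^p ≤ (1 + ε i * u i)^p := Real.rpow_le_rpow (by norm_num) h1 hp0
    have h3 : (u i)^p ≤ ((1:ℝ)/2)^p := Real.rpow_le_rpow hu0 hui hp0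
    have h4 : ((1:ℝ)/2)^p = ((2:ℝ)^p)⁻¹ := by
      rw [one_div, Real.inv_rpow (by norm_num : (0:ℝ) ≤ 2)]
    have hr : 1/((2:ℝ)^p+1) ≤ (1 + ε i * u i)^p/(1 + (u i)^p) := by
      have e : 1/((2:ℝ)^p+1) = ((2:ℝ)^p)⁻¹ / (1 + ((2:ℝ)^p)⁻¹) := by
        rw [eq_div_iff (by positivity)]
        field_simp
      rw [e, ← h4]
      exact div_le_div₀ (Real.rpow_nonneg (hbase i) p) h2 (hden i)
        (by rw [h4] at h3 ⊢; linarith)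
    rw [mul_div_assoc]
    exact mul_le_mul (hα i) hr (by positivity) (hα0 i)
  set G := (Finset.univ.erase j).filter (fun i => u i ≤ 1/2) with hG
  -- card bound
  have hsplit : (Finset.univ.filter fun i => 1/2 < u i).card
      + (Finset.univ.filter fun i : Fin n => u i ≤ 1/2).card = n := by
    have := Finset.card_filter_add_card_filter_not
      (s := (Finset.univ : Finset (Fin n))) (p := fun i => 1/2 < u i)
    simpa [not_lt, Finset.card_univ] using this
  have hGe : G = ((Finset.univ : Finset (Fin n)).filter (fun i => u i ≤ 1/2)).erase j := by
    rw [hG, Finset.filter_erase]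
  have hGcard : ((Finset.univ : Finset (Fin n)).filter (fun i => u i ≤ 1/2)).card ≤ G.card + 1 := by
    rw [hGe]
    have := Finset.pred_card_le_card_erase
      (s := (Finset.univ : Finset (Fin n)).filter (fun i => u i ≤ 1/2)) (a := j)
    omega
  have hGreal : (n:ℝ)/4 ≤ (G.card:ℝ) := by
    have h1 : ((Finset.univ.filter fun i : Fin n => u i ≤ 1/2).card : ℝ)
        = (n:ℝ) - ((Finset.univ.filter fun i => 1/2 < u i).card : ℝ) := by
      have := hsplit
      push_cast [← this]
      ring
    have h2 : ((Finset.univ.filter fun i : Fin n => u i ≤ 1/2).card : ℝ) ≤ (G.card:ℝ) + 1 := by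
      exact_mod_cast hGcard
    linarith
  -- sum bound
  have hsub : G ⊆ Finset.univ.erase j := Finset.filter_subset _ _
  have hsum1 : ∑ i ∈ G, α i * (1 + ε i * u i) ^ p / (1 + u i ^ p)
      ≤ ∑ i ∈ Finset.univ.erase j, α i * (1 + ε i * u i) ^ p / (1 + u i ^ p) :=
    Finset.sum_le_sum_of_subset_of_nonneg hsub (fun i _ _ => htermnn i)
  have hsum2 : (G.card : ℝ) * b ≤ ∑ i ∈ G, α i * (1 + ε i * u i) ^ p / (1 + u i ^ p) := by
    have := Finset.card_nsmul_le_sum G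
      (fun i => α i * (1 + ε i * u i) ^ p / (1 + u i ^ p)) b
      (fun i hi => hterm i (Finset.mem_filter.mp hi).2)
    simpa [nsmul_eq_mul] using this
  have h8 : (2:ℝ)^(p+3) = 8 * (2:ℝ)^p := by
    rw [Real.rpow_add two_pos,
      show ((2:ℝ))^(3:ℝ) = 8 by
        rw [show (3:ℝ) = ((3:ℕ):ℝ) by norm_num, Real.rpow_natCast]; norm_num]
    ring
  have hfinal : 1 / (8 + (2:ℝ) ^ (p + 3)) ≤ (G.card : ℝ) * b := by
    have e : 1 / (8 + (2:ℝ) ^ (p + 3)) = (n:ℝ)/4 * b := by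
      rw [h8, hb]
      field_simp
      ring
    rw [e]
    exact mul_le_mul_of_nonneg_right hGreal hbpos.le
  linarith
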